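/- Let λ and μ be partitions and let x be a positive integer. Let ν be the partition obtained by sorting the sequence (λ_1+μ_1, ..., λ_x+μ_x, λ_{x+1}, μ_{x+1}, λ_{x+2}, μ_{x+2}, ...) into weakly decreasing order. Then λ ⊆ ν and there exists a Littlewood–Richardson tableau of shape ν/λ and type μ. -/

import Mathlib

/-- A partition: a weakly decreasing sequence `part 0 ≥ part 1 ≥ ⋯` of natural
numbers that is eventually zero.  `part i` is the `(i+1)`-st part `λ_{i+1}`
(so we use 0-based indexing throughout). -/
structure Partition' where
  part : ℕ → ℕ
  antitone : ∀ ⦃i j : ℕ⦄, i ≤ j → part j ≤ part i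
  eventually_zero : ∃ N, ∀ i, N ≤ i → part i = 0

/-- `ν` is a monomial constituent of `m_λ · m_μ`: there is a permutation `σ` of
the indices such that `ν` is the weakly decreasing rearrangement (witnessed by
the bijection `τ`) of the sequence `i ↦ λ_i + μ_{σ i}`. -/
def IsMonomialConstituent (l m n : Partition') : Prop :=
  ∃ σ τ : Equiv.Perm ℕ, ∀ i, n.part i = l.part (τ i) + m.part (σ (τ i))

/-- The cell in row `i`, column `j` (0-indexed) belongs to the skew diagram `ν/λ`. -/
def InSkew (l n : Partition') (i j : ℕ) : Prop := l.part i ≤ j ∧ j < n.part i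

/-- `T` is a Littlewood–Richardson tableau of shape `ν/λ` and type `μ`:
its entries (on the cells of `ν/λ`) are positive integers, weakly increasing
along rows and strictly increasing down columns; for each `k ≥ 0` the entry
`k+1` occurs exactly `μ_{k+1}` times; and its reverse reading word (rows top to
bottom, each row right to left) is a lattice permutation, i.e. in every prefix
(the cells in rows `< r` together with the cells of row `r` in columns `≥ c`)
the entry `k+1` occurs at least as often as the entry `k+2`. -/
def IsLRTableau (l n m : Partition') (T : ℕ → ℕ → ℕ) : Prop :=
  (∀ i j, InSkew l n i j → 1 ≤ T i j) ∧
  (∀ i j j', InSkew l n i j → InSkew l n i j' → j ≤ j' → T i j ≤ T i j') ∧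
  (∀ i i' j, InSkew l n i j → InSkew l n i' j → i < i' → T i j < T i' j) ∧
  (∀ k : ℕ, Set.ncard {p : ℕ × ℕ | InSkew l n p.1 p.2 ∧ T p.1 p.2 = k + 1} = m.part k) ∧
  (∀ r c k : ℕ,
    Set.ncard {p : ℕ × ℕ | InSkew l n p.1 p.2 ∧ (p.1 < r ∨ (p.1 = r ∧ c ≤ p.2)) ∧
        T p.1 p.2 = k + 2} ≤
    Set.ncard {p : ℕ × ℕ | InSkew l n p.1 p.2 ∧ (p.1 < r ∨ (p.1 = r ∧ c ≤ p.2)) ∧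
        T p.1 p.2 = k + 1})

namespace LRAux

/-- The number of indices `t` with `f t > c` (the conjugate partition). -/
noncomputable def cnt (f : ℕ → ℕ) (c : ℕ) : ℕ := Set.ncard {t : ℕ | c < f t}

lemma ncard_Iio (b : ℕ) : (Set.Iio b).ncard = b := by
  rw [← Finset.coe_Iio, Set.ncard_coe_finset, Nat.card_Iio]

lemma ncard_Ico (a b : ℕ) : (Set.Ico a b).ncard = b - a := by
  rw [← Finset.coe_Ico, Set.ncard_coe_finset, Nat.card_Ico]

lemma cnt_set_eq (f : ℕ → ℕ) (hf : ∀ ⦃i j : ℕ⦄, i ≤ j → f j ≤ f i)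
    (h0 : ∃ N, ∀ i, N ≤ i → f i = 0) (c : ℕ) :
    {t : ℕ | c < f t} = Set.Iio (cnt f c) := by
  obtain ⟨N, hN⟩ := h0
  have hex : ∃ t, f t ≤ c := ⟨N, by simp [hN N le_rfl]⟩
  have hset : {t : ℕ | c < f t} = Set.Iio (Nat.find hex) := by
    ext t
    simp only [Set.mem_setOf_eq, Set.mem_Iio]
    constructor
    · intro h
      by_contra hc
      push_neg at hc
      have := le_trans (hf hc) (Nat.find_spec hex)
      omega
    · intro h
      have := Nat.find_min hex h
      omega
  have hcard : cnt f c = Nat.find hex := by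
    rw [cnt, hset, ncard_Iio]
  rw [hset, hcard]

lemma cnt_iff (f : ℕ → ℕ) (hf : ∀ ⦃i j : ℕ⦄, i ≤ j → f j ≤ f i)
    (h0 : ∃ N, ∀ i, N ≤ i → f i = 0) (c i : ℕ) :
    c < f i ↔ i < cnt f c := by
  have h := Set.ext_iff.mp (cnt_set_eq f hf h0 c) i
  simpa using h

end LRAux

open LRAux in
/-- Let `x ≥ 1` and let `ν` be the weakly decreasing rearrangement of the
sequence `(λ_1+μ_1, …, λ_x+μ_x, λ_{x+1}, μ_{x+1}, λ_{x+2}, μ_{x+2}, …)`.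
Then `λ ⊆ ν` and there is a Littlewood–Richardson tableau of shape `ν/λ` and
type `μ`.  (0-indexed: position `k < x` of the unsorted sequence is
`λ_k + μ_k`, and positions `x + 2s`, `x + 2s + 1` are `λ_{x+s}`, `μ_{x+s}`.) -/
theorem lr_mixed_sort (l m n : Partition') (x : ℕ) (hx : 1 ≤ x)
    (hn : ∃ τ : Equiv.Perm ℕ, ∀ i,
      n.part i =
        if τ i < x then l.part (τ i) + m.part (τ i)
        else if (τ i - x) % 2 = 0 then l.part (x + (τ i - x) / 2)
        else m.part (x + (τ i - x) / 2)) :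
    (∀ i, l.part i ≤ n.part i) ∧ ∃ T : ℕ → ℕ → ℕ, IsLRTableau l n m T := by
  obtain ⟨τ, hτ⟩ := hn
  set L : ℕ → ℕ := cnt l.part with hLdef
  set M : ℕ → ℕ := cnt m.part with hMdef
  set Nu : ℕ → ℕ := cnt n.part with hNdef
  have hL : ∀ c i, c < l.part i ↔ i < L c :=
    fun c i => cnt_iff l.part l.antitone l.eventually_zero c i
  have hM : ∀ c i, c < m.part i ↔ i < M c :=
    fun c i => cnt_iff m.part m.antitone m.eventually_zero c i
  have hN : ∀ c i, c < n.part i ↔ i < Nu c :=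
    fun c i => cnt_iff n.part n.antitone n.eventually_zero c i
  -- the head set
  set A : ℕ → Set ℕ := fun c => {p : ℕ | p < x ∧ c < l.part p + m.part p} with hAdef
  have hAmem : ∀ c p, p ∈ A c ↔ (p < x ∧ c < l.part p + m.part p) := by
    intro c p
    exact Iff.rfl
  have hAfin : ∀ c, (A c).Finite := by
    intro c
    apply Set.Finite.subset (Set.finite_Iio x)
    intro p hp
    exact ((hAmem c p).mp hp).1
  have hAle : ∀ c, (A c).ncard ≤ x := by
    intro c
    calc (A c).ncard ≤ (Set.Iio x).ncard :=
          Set.ncard_le_ncard (fun p hp => ((hAmem c p).mp hp).1) (Set.finite_Iio x)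
      _ = x := ncard_Iio x
  -- main counting identity
  have hNc : ∀ c, Nu c = (A c).ncard + (L c - x) + (M c - x) := by
    intro c
    have h1 : {i : ℕ | c < n.part i} = ⇑τ ⁻¹'
        {p : ℕ | c < (if p < x then l.part p + m.part p
          else if (p - x) % 2 = 0 then l.part (x + (p - x) / 2)
          else m.part (x + (p - x) / 2))} := by
      ext i
      simp only [Set.mem_setOf_eq, Set.mem_preimage]
      rw [hτ i]
    have h2 : Nu c = ({p : ℕ | c < (if p < x then l.part p + m.part p
          else if (p - x) % 2 = 0 then l.part (x + (p - x) / 2)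
          else m.part (x + (p - x) / 2))}).ncard := by
      rw [hNdef]
      show Set.ncard {i : ℕ | c < n.part i} = _
      rw [h1, ← Equiv.symm_symm τ, ← Equiv.image_eq_preimage_symm,
        Set.ncard_image_of_injective _ (Equiv.injective _)]
    have hsplit : {p : ℕ | c < (if p < x then l.part p + m.part p
          else if (p - x) % 2 = 0 then l.part (x + (p - x) / 2)
          else m.part (x + (p - x) / 2))} =
        A c ∪ (fun s => x + 2 * s) '' Set.Iio (L c - x)
            ∪ (fun s => x + 2 * s + 1) '' Set.Iio (M c - x) := by
      ext p
      simp only [Set.mem_setOf_eq, Set.mem_union, Set.mem_image, Set.mem_Iio, hAmem]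
      by_cases hp : p < x
      · rw [if_pos hp]
        constructor
        · intro h
          exact Or.inl (Or.inl ⟨hp, h⟩)
        · rintro ((⟨_, h⟩ | ⟨s, _, hs⟩) | ⟨s, _, hs⟩)
          · exact h
          · omega
          · omega
      · by_cases he : (p - x) % 2 = 0
        · rw [if_neg hp, if_pos he]
          constructor
          · intro h
            refine Or.inl (Or.inr ⟨(p - x) / 2, ?_, by omega⟩)
            have := (hL c (x + (p - x) / 2)).mp h
            omega
          · rintro ((⟨h, _⟩ | ⟨s, hs, hsp⟩) | ⟨s, _, hsp⟩)
            · omega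
            · have hps : (p - x) / 2 = s := by omega
              rw [hps]
              exact (hL c (x + s)).mpr (by omega)
            · omega
        · rw [if_neg hp, if_neg he]
          constructor
          · intro h
            refine Or.inr ⟨(p - x) / 2, ?_, by omega⟩
            have := (hM c (x + (p - x) / 2)).mp h
            omega
          · rintro ((⟨h, _⟩ | ⟨s, _, hsp⟩) | ⟨s, hs, hsp⟩)
            · omega
            · omega
            · have hps : (p - x) / 2 = s := by omega
              rw [hps]
              exact (hM c (x + s)).mpr (by omega)
    have hfinB : ((fun s => x + 2 * s) '' Set.Iio (L c - x)).Finite :=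
      (Set.finite_Iio _).image _
    have hfinC : ((fun s => x + 2 * s + 1) '' Set.Iio (M c - x)).Finite :=
      (Set.finite_Iio _).image _
    have hd1 : Disjoint (A c) ((fun s => x + 2 * s) '' Set.Iio (L c - x)) := by
      rw [Set.disjoint_left]
      intro a ha hb
      obtain ⟨hax, _⟩ := (hAmem c a).mp ha
      obtain ⟨s, _, hs⟩ := hb
      beta_reduce at hs
      omega
    have hd2 : Disjoint (A c ∪ (fun s => x + 2 * s) '' Set.Iio (L c - x))
        ((fun s => x + 2 * s + 1) '' Set.Iio (M c - x)) := by
      rw [Set.disjoint_left]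
      intro a ha hb
      obtain ⟨t, _, ht⟩ := hb
      beta_reduce at ht
      rcases ha with ha | ⟨s, _, hs⟩
      · have := ((hAmem c a).mp ha).1
        omega
      · beta_reduce at hs
        omega
    rw [h2, hsplit, Set.ncard_union_eq hd2 ((hAfin c).union hfinB) hfinC,
      Set.ncard_union_eq hd1 (hAfin c) hfinB,
      Set.ncard_image_of_injective _
        (fun a b h => by beta_reduce at h; omega : Function.Injective (fun s => x + 2 * s)),
      Set.ncard_image_of_injective _
        (fun a b h => by beta_reduce at h; omega : Function.Injective (fun s => x + 2 * s + 1)),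
      ncard_Iio, ncard_Iio]
  -- claim (i)
  have hclaim1 : ∀ c k, k < x → c < l.part k + m.part k → k < Nu c := by
    intro c k hk h
    have hsub : Set.Iio (k + 1) ⊆ A c := by
      intro p hp
      simp only [Set.mem_Iio] at hp
      refine (hAmem c p).mpr ⟨by omega, lt_of_lt_of_le h ?_⟩
      exact Nat.add_le_add (l.antitone (by omega)) (m.antitone (by omega))
    have h1 : k + 1 ≤ (A c).ncard := by
      calc k + 1 = (Set.Iio (k + 1)).ncard := (ncard_Iio _).symm
        _ ≤ (A c).ncard := Set.ncard_le_ncard hsub (hAfin c)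
    rw [hNc c]; omega
  -- claim (ii)
  have hclaim2 : ∀ c k, k < x → l.part k + m.part k ≤ c → Nu c ≤ k := by
    intro c k hk h
    have hA : (A c).ncard ≤ k := by
      have hsub : A c ⊆ Set.Iio k := by
        intro p hp
        obtain ⟨hpx, hpc⟩ := (hAmem c p).mp hp
        simp only [Set.mem_Iio]
        by_contra hc
        push_neg at hc
        have := Nat.add_le_add (l.antitone hc) (m.antitone hc)
        omega
      calc (A c).ncard ≤ (Set.Iio k).ncard := Set.ncard_le_ncard hsub (Set.finite_Iio k)
        _ = k := ncard_Iio k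
    have hLk : L c ≤ k := by
      have hsub : {t : ℕ | c < l.part t} ⊆ Set.Iio k := by
        intro t ht
        simp only [Set.mem_setOf_eq] at ht
        simp only [Set.mem_Iio]
        by_contra hc
        push_neg at hc
        have := l.antitone hc
        omega
      calc L c = ({t : ℕ | c < l.part t}).ncard := rfl
        _ ≤ (Set.Iio k).ncard := Set.ncard_le_ncard hsub (Set.finite_Iio k)
        _ = k := ncard_Iio k
    have hMk : M c ≤ k := by
      have hsub : {t : ℕ | c < m.part t} ⊆ Set.Iio k := by
        intro t ht
        simp only [Set.mem_setOf_eq] at ht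
        simp only [Set.mem_Iio]
        by_contra hc
        push_neg at hc
        have := m.antitone hc
        omega
      calc M c = ({t : ℕ | c < m.part t}).ncard := rfl
        _ ≤ (Set.Iio k).ncard := Set.ncard_le_ncard hsub (Set.finite_Iio k)
        _ = k := ncard_Iio k
    rw [hNc c]; omega
  -- claim (iii) : L ≤ Nu pointwise
  have hsubLN : ∀ c, L c ≤ Nu c := by
    intro c
    have hsub : Set.Iio (min (L c) x) ⊆ A c := by
      intro p hp
      simp only [Set.mem_Iio] at hp
      refine (hAmem c p).mpr ⟨by omega, ?_⟩
      have : c < l.part p := (hL c p).mpr (by omega)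
      omega
    have h1 : min (L c) x ≤ (A c).ncard := by
      calc min (L c) x = (Set.Iio (min (L c) x)).ncard := (ncard_Iio _).symm
        _ ≤ (A c).ncard := Set.ncard_le_ncard hsub (hAfin c)
    rw [hNc c]; omega
  -- claim (iv) : tail characterization
  have htail : ∀ c s, s + max x (L c) < Nu c ↔ x + s < M c := by
    intro c s
    constructor
    · intro h
      by_contra hc
      push_neg at hc
      have h1 := hAle c
      rw [hNc c] at h
      omega
    · intro h
      have hAx : Set.Iio x ⊆ A c := by
        intro p hp
        simp only [Set.mem_Iio] at hp
        refine (hAmem c p).mpr ⟨hp, ?_⟩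
        have : c < m.part p := (hM c p).mpr (by omega)
        omega
      have h1 : x ≤ (A c).ncard := by
        calc x = (Set.Iio x).ncard := (ncard_Iio _).symm
          _ ≤ (A c).ncard := Set.ncard_le_ncard hAx (hAfin c)
      rw [hNc c]
      omega
  -- rows of ν in the head
  have hrow : ∀ k, k < x → n.part k = l.part k + m.part k := by
    intro k hk
    have e1 : ∀ c, c < n.part k ↔ c < l.part k + m.part k := by
      intro c
      rw [hN c k]
      constructor
      · intro h
        by_contra hc
        push_neg at hc
        have := hclaim2 c k hk hc
        omega
      · exact hclaim1 c k hk
    have h1 := e1 (n.part k)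
    have h2 := e1 (l.part k + m.part k)
    omega
  -- containment
  have hcont : ∀ i, l.part i ≤ n.part i := by
    intro i
    by_contra hc
    push_neg at hc
    have h1 : i < L (n.part i) := (hL (n.part i) i).mp hc
    have h2 : i < Nu (n.part i) := lt_of_lt_of_le h1 (hsubLN _)
    have := (hN (n.part i) i).mpr h2
    omega
  -- skew membership in terms of conjugates
  have hskew : ∀ i j, InSkew l n i j ↔ (L j ≤ i ∧ i < Nu j) := by
    intro i j
    constructor
    · rintro ⟨h1, h2⟩
      constructor
      · by_contra hc
        push_neg at hc
        have := (hL j i).mpr hc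
        omega
      · exact (hN j i).mp h2
    · rintro ⟨h1, h2⟩
      constructor
      · by_contra hc
        push_neg at hc
        have := (hL j i).mp hc
        omega
      · exact (hN j i).mpr h2
  -- content set descriptions for the explicit tableau
  have hset1 : ∀ k, k < x →
      {p : ℕ × ℕ | InSkew l n p.1 p.2 ∧ (p.1 + 1) - (L p.2 - x) = k + 1} =
        (fun j => ((k : ℕ), j)) '' Set.Ico (l.part k) (l.part k + m.part k) := by
    intro k hk
    ext ⟨i, j⟩
    simp only [Set.mem_setOf_eq, Set.mem_image, Set.mem_Ico, Prod.mk.injEq]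
    constructor
    · rintro ⟨hsk, hT⟩
      obtain ⟨hLj, hNj⟩ := (hskew i j).mp hsk
      have hix : i < x := by by_contra hc; push_neg at hc; omega
      have hik : i = k := by omega
      refine ⟨j, ⟨?_, ?_⟩, by omega, rfl⟩
      · rw [← hik]; exact hsk.1
      · rw [← hrow k hk, ← hik]; exact hsk.2
    · rintro ⟨j', ⟨hj1, hj2⟩, hik, hjj⟩
      subst hjj
      have hsk : InSkew l n k j' := ⟨hj1, by rw [hrow k hk]; exact hj2⟩
      have hLj : L j' ≤ k := by
        by_contra hc
        push_neg at hc
        have := (hL j' k).mpr hc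
        omega
      subst hik
      exact ⟨hsk, by omega⟩
  have hset2 : ∀ k, x ≤ k →
      {p : ℕ × ℕ | InSkew l n p.1 p.2 ∧ (p.1 + 1) - (L p.2 - x) = k + 1} =
        (fun j => (k + (L j - x), j)) '' Set.Iio (m.part k) := by
    intro k hk
    ext ⟨i, j⟩
    simp only [Set.mem_setOf_eq, Set.mem_image, Set.mem_Iio, Prod.mk.injEq]
    constructor
    · rintro ⟨hsk, hT⟩
      obtain ⟨hLj, hNj⟩ := (hskew i j).mp hsk
      have hix : x ≤ i := by
        by_contra hc
        push_neg at hc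
        omega
      have hik : i = k + (L j - x) := by omega
      have hmx : (k - x) + max x (L j) < Nu j := by omega
      have hMj := (htail j (k - x)).mp hmx
      exact ⟨j, (hM j k).mpr (by omega), by omega, rfl⟩
    · rintro ⟨j', hj', hik, hjj⟩
      subst hjj
      have hMj : k < M j' := (hM j' k).mp hj'
      have hNuj : (k - x) + max x (L j') < Nu j' := (htail j' (k - x)).mpr (by omega)
      have hsk : InSkew l n (k + (L j' - x)) j' := by
        rw [hskew]
        constructor <;> omega
      subst hik
      exact ⟨hsk, by omega⟩
  -- finiteness of the skew diagram
  have hskfin : ({p : ℕ × ℕ | InSkew l n p.1 p.2}).Finite := by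
    obtain ⟨Nb, hNb⟩ := n.eventually_zero
    apply Set.Finite.subset ((Set.finite_Iio Nb).prod (Set.finite_Iio (n.part 0)))
    rintro ⟨i, j⟩ ⟨h1, h2⟩
    simp only [] at h1 h2
    constructor
    · simp only [Set.mem_Iio]
      by_contra hc
      push_neg at hc
      have := hNb i hc
      omega
    · simp only [Set.mem_Iio]
      have := n.antitone (Nat.zero_le i)
      omega
  refine ⟨hcont, fun i j => (i + 1) - (L j - x), ?_, ?_, ?_, ?_, ?_⟩
  -- positivity
  · intro i j hij
    have h := (hskew i j).mp hij
    show 1 ≤ (i + 1) - (L j - x)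
    omega
  -- rows weakly increasing
  · intro i j j' hij hij' hjj
    have hLmono : L j' ≤ L j := by
      by_contra hc
      push_neg at hc
      have h1 : j' < l.part (L j) := (hL j' (L j)).mpr hc
      have h2 : j < l.part (L j) := by omega
      have := (hL j (L j)).mp h2
      omega
    show (i + 1) - (L j - x) ≤ (i + 1) - (L j' - x)
    omega
  -- columns strictly increasing
  · intro i i' j hij hij' hii
    have h := (hskew i j).mp hij
    show (i + 1) - (L j - x) < (i' + 1) - (L j - x)
    omega
  -- content
  · intro k
    show Set.ncard {p : ℕ × ℕ | InSkew l n p.1 p.2 ∧ (p.1 + 1) - (L p.2 - x) = k + 1}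
        = m.part k
    by_cases hk : k < x
    · rw [hset1 k hk, Set.ncard_image_of_injective _
        (fun a b h => by injection h : Function.Injective (fun j => ((k : ℕ), j))),
        ncard_Ico]
      omega
    · push_neg at hk
      rw [hset2 k hk, Set.ncard_image_of_injective _
        (fun a b h => by injection h : Function.Injective (fun j => (k + (L j - x), j))),
        ncard_Iio]
  -- lattice condition
  · intro r c k
    show Set.ncard {p : ℕ × ℕ | InSkew l n p.1 p.2 ∧ (p.1 < r ∨ (p.1 = r ∧ c ≤ p.2)) ∧
          (p.1 + 1) - (L p.2 - x) = k + 2} ≤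
        Set.ncard {p : ℕ × ℕ | InSkew l n p.1 p.2 ∧ (p.1 < r ∨ (p.1 = r ∧ c ≤ p.2)) ∧
          (p.1 + 1) - (L p.2 - x) = k + 1}
    have hfin1 : ({p : ℕ × ℕ | InSkew l n p.1 p.2 ∧ (p.1 < r ∨ (p.1 = r ∧ c ≤ p.2)) ∧
        (p.1 + 1) - (L p.2 - x) = k + 1}).Finite :=
      hskfin.subset (fun p hp => hp.1)
    by_cases hk1 : k + 1 < x
    -- both values in the head
    · refine Set.ncard_le_ncard_of_injOn
        (fun p => ((k : ℕ), l.part k + (p.2 - l.part (k + 1)))) ?_ ?_ hfin1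
      · rintro ⟨i, j⟩ ⟨hsk, hpre, hT⟩
        simp only [] at hsk hpre hT
        have hmem : (i, j) ∈ {p : ℕ × ℕ | InSkew l n p.1 p.2 ∧
            (p.1 + 1) - (L p.2 - x) = (k + 1) + 1} := by
          show InSkew l n i j ∧ (i + 1) - (L j - x) = (k + 1) + 1
          exact ⟨hsk, by omega⟩
        rw [hset1 (k + 1) hk1] at hmem
        obtain ⟨a, ⟨ha1, ha2⟩, hai⟩ := hmem
        simp only [Prod.mk.injEq] at hai
        obtain ⟨hik, hjj⟩ := hai
        rw [hjj] at ha1 ha2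
        have hmm : m.part (k + 1) ≤ m.part k := m.antitone (by omega)
        simp only [Set.mem_setOf_eq]
        have hLc : L (l.part k + (j - l.part (k + 1))) ≤ k := by
          by_contra hc
          push_neg at hc
          have := (hL (l.part k + (j - l.part (k + 1))) k).mpr hc
          omega
        refine ⟨⟨by omega, ?_⟩, Or.inl (by omega), by omega⟩
        rw [hrow k (by omega)]
        omega
      · rintro ⟨i, j⟩ ⟨hsk, _, hT⟩ ⟨i', j'⟩ ⟨hsk', _, hT'⟩ heq
        simp only [] at hsk hT hsk' hT'
        have h1 : (i, j) ∈ {p : ℕ × ℕ | InSkew l n p.1 p.2 ∧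
            (p.1 + 1) - (L p.2 - x) = (k + 1) + 1} := by
          show InSkew l n i j ∧ (i + 1) - (L j - x) = (k + 1) + 1
          exact ⟨hsk, by omega⟩
        have h2 : (i', j') ∈ {p : ℕ × ℕ | InSkew l n p.1 p.2 ∧
            (p.1 + 1) - (L p.2 - x) = (k + 1) + 1} := by
          show InSkew l n i' j' ∧ (i' + 1) - (L j' - x) = (k + 1) + 1
          exact ⟨hsk', by omega⟩
        rw [hset1 (k + 1) hk1] at h1 h2
        obtain ⟨a, ⟨ha1, _⟩, hai⟩ := h1
        obtain ⟨b, ⟨hb1, _⟩, hbi⟩ := h2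
        simp only [Prod.mk.injEq] at hai hbi heq ⊢
        constructor <;> omega
    · by_cases hk2 : k + 1 = x
      -- value k+2 in the tail, value k+1 = x in the head
      · refine Set.ncard_le_ncard_of_injOn
          (fun p => ((k : ℕ), l.part k + p.2)) ?_ ?_ hfin1
        · rintro ⟨i, j⟩ ⟨hsk, hpre, hT⟩
          simp only [] at hsk hpre hT
          have hmem : (i, j) ∈ {p : ℕ × ℕ | InSkew l n p.1 p.2 ∧
              (p.1 + 1) - (L p.2 - x) = (k + 1) + 1} := by
            show InSkew l n i j ∧ (i + 1) - (L j - x) = (k + 1) + 1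
            exact ⟨hsk, by omega⟩
          rw [hset2 (k + 1) (by omega)] at hmem
          obtain ⟨a, ha, hai⟩ := hmem
          simp only [Set.mem_Iio] at ha
          simp only [Prod.mk.injEq] at hai
          obtain ⟨hik, hjj⟩ := hai
          rw [hjj] at ha hik
          have hmm : m.part (k + 1) ≤ m.part k := m.antitone (by omega)
          simp only [Set.mem_setOf_eq]
          have hLc : L (l.part k + j) ≤ k := by
            by_contra hc
            push_neg at hc
            have := (hL (l.part k + j) k).mpr hc
            omega
          refine ⟨⟨by omega, ?_⟩, Or.inl (by omega), by omega⟩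
          rw [hrow k (by omega)]
          omega
        · rintro ⟨i, j⟩ ⟨hsk, _, hT⟩ ⟨i', j'⟩ ⟨hsk', _, hT'⟩ heq
          simp only [] at hsk hT hsk' hT'
          have h1 : (i, j) ∈ {p : ℕ × ℕ | InSkew l n p.1 p.2 ∧
              (p.1 + 1) - (L p.2 - x) = (k + 1) + 1} := by
            show InSkew l n i j ∧ (i + 1) - (L j - x) = (k + 1) + 1
            exact ⟨hsk, by omega⟩
          have h2 : (i', j') ∈ {p : ℕ × ℕ | InSkew l n p.1 p.2 ∧
              (p.1 + 1) - (L p.2 - x) = (k + 1) + 1} := by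
            show InSkew l n i' j' ∧ (i' + 1) - (L j' - x) = (k + 1) + 1
            exact ⟨hsk', by omega⟩
          rw [hset2 (k + 1) (by omega)] at h1 h2
          obtain ⟨a, _, hai⟩ := h1
          obtain ⟨b, _, hbi⟩ := h2
          simp only [Prod.mk.injEq] at hai hbi heq ⊢
          obtain ⟨hai1, hai2⟩ := hai
          obtain ⟨hbi1, hbi2⟩ := hbi
          obtain ⟨heq1, heq2⟩ := heq
          have hab : a = b := by omega
          rw [hab] at hai1
          constructor <;> omega
      -- both values in the tail
      · have hk : x ≤ k := by omega
        refine Set.ncard_le_ncard_of_injOn (fun p => (p.1 - 1, p.2)) ?_ ?_ hfin1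
        · rintro ⟨i, j⟩ ⟨hsk, hpre, hT⟩
          simp only [] at hsk hpre hT
          have hmem : (i, j) ∈ {p : ℕ × ℕ | InSkew l n p.1 p.2 ∧
              (p.1 + 1) - (L p.2 - x) = (k + 1) + 1} := by
            show InSkew l n i j ∧ (i + 1) - (L j - x) = (k + 1) + 1
            exact ⟨hsk, by omega⟩
          rw [hset2 (k + 1) (by omega)] at hmem
          obtain ⟨a, ha, hai⟩ := hmem
          simp only [Set.mem_Iio] at ha
          simp only [Prod.mk.injEq] at hai
          obtain ⟨hik, hjj⟩ := hai
          rw [hjj] at ha hik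
          have hmm : m.part (k + 1) ≤ m.part k := m.antitone (by omega)
          obtain ⟨hLj, hNj⟩ := (hskew i j).mp hsk
          simp only [Set.mem_setOf_eq]
          refine ⟨?_, Or.inl (by omega), by omega⟩
          rw [hskew]
          constructor <;> omega
        · rintro ⟨i, j⟩ ⟨hsk, _, hT⟩ ⟨i', j'⟩ ⟨hsk', _, hT'⟩ heq
          simp only [] at hsk hT hsk' hT'
          have h1 : (i, j) ∈ {p : ℕ × ℕ | InSkew l n p.1 p.2 ∧
              (p.1 + 1) - (L p.2 - x) = (k + 1) + 1} := by
            show InSkew l n i j ∧ (i + 1) - (L j - x) = (k + 1) + 1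
            exact ⟨hsk, by omega⟩
          have h2 : (i', j') ∈ {p : ℕ × ℕ | InSkew l n p.1 p.2 ∧
              (p.1 + 1) - (L p.2 - x) = (k + 1) + 1} := by
            show InSkew l n i' j' ∧ (i' + 1) - (L j' - x) = (k + 1) + 1
            exact ⟨hsk', by omega⟩
          rw [hset2 (k + 1) (by omega)] at h1 h2
          obtain ⟨a, _, hai⟩ := h1
          obtain ⟨b, _, hbi⟩ := h2
          simp only [Prod.mk.injEq] at hai hbi heq ⊢
          obtain ⟨hai1, hai2⟩ := hai
          obtain ⟨hbi1, hbi2⟩ := hbi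
          obtain ⟨heq1, heq2⟩ := heq
          have hab : a = b := by omega
          rw [hab] at hai1
          constructor <;> omega
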